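/- arXiv:2203.15494 — 2 statements merged into one kernel-verified Lean document; each statement's English description precedes it below -/
import Mathlib

section
/- Let 1 ≤ i < j ≤ m−1 and let n = 4. Then β_j ≱_PS β_i; that is, there exists a profile of 4 preferences over m candidates at which the i-Borda rule β_i is manipulable but the j-Borda rule β_j is not manipulable. -/
set_option maxHeartbeats 1000000


/-- A preference order on `m` candidates: `σ c` is the position of candidate `c`
(position `0` is the most preferred). `σ c < σ d` means `c` is strictly preferred to `d`. -/
abbrev Pref (m : ℕ) := Fin m ≃ Fin m

/-- A voting rule for `n` voters and `m` candidates. -/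
abbrev Rule (m n : ℕ) := (Fin n → Pref m) → Fin m

/-- Total score of candidate `c` under score vector `s` (indexed by position) at profile `P`. -/
def score {m n : ℕ} (s : Fin m → ℕ) (P : Fin n → Pref m) (c : Fin m) : ℕ :=
  ∑ v, s (P v c)

/-- The scoring rule with score vector `s`: the winner is the candidate that is first in the
lexicographic tie-breaking order (i.e. has the least index) among those of maximal score. -/
def winner {m n : ℕ} [NeZero m] (s : Fin m → ℕ) (P : Fin n → Pref m) : Fin m :=
  (Finset.univ.filter fun c => ∀ d, score s P d ≤ score s P c).min' (by
    obtain ⟨c, -, hc⟩ := Finset.exists_max_image Finset.univ (score s P) Finset.univ_nonempty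
    exact ⟨c, Finset.mem_filter.mpr ⟨Finset.mem_univ c, fun d => hc d (Finset.mem_univ d)⟩⟩)

/-- `k`-approval, `α_k`: one point for each of the top `k` positions. -/
def approval (m n k : ℕ) [NeZero m] : Rule m n :=
  winner (fun r => if (r : ℕ) < k then 1 else 0)

/-- `k`-Borda, `β_k`: `max (0, k - r + 1)` points for (`1`-indexed) position `r`, i.e. `k - r`
(truncated subtraction) points for `0`-indexed position `r`. -/
def kBorda (m n k : ℕ) [NeZero m] : Rule m n :=
  winner (fun r => k - (r : ℕ))

/-- `f` is manipulable at profile `P`: some voter `v` can misreport some preference `Q` and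
obtain an outcome strictly preferred (by `v`'s true preferences) to the sincere outcome. -/
def Manipulable {m n : ℕ} (f : Rule m n) (P : Fin n → Pref m) : Prop :=
  ∃ (v : Fin n) (Q : Pref m), P v (f (Function.update P v Q)) < P v (f P)

/-- `f ≥_PS g` : every profile at which `g` is manipulable is one at which `f` is manipulable. -/
def MoreManip {m n : ℕ} (f g : Rule m n) : Prop :=
  ∀ P : Fin n → Pref m, Manipulable g P → Manipulable f P

namespace S14

/-! Positions of the four sincere ballots, as functions of the candidate index.
Candidates: `0 = a`, `1 = b`, `2 = u`, `3..i+1` the "D" junk, `i+2..j` the passive junk,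
`> j` ghosts. -/

def pf1 (i j c : ℕ) : ℕ :=
  if c = 0 then j else if c = 1 then 0 else if c = 2 then j-1
  else if c ≤ i+1 then j+1-c else if c ≤ j then c-i-1 else c
def pf2 (i j c : ℕ) : ℕ :=
  if c = 0 then 1 else if c = 1 then 2 else if c = 2 then 0
  else if i = 1 then c else if c = 3 then j else if c ≤ j then c-1 else c
def pf3 (i j c : ℕ) : ℕ :=
  if c = 0 then j else if c = 1 then 0 else if c = 2 then j-i
  else if c = i+1 then j-1 else if c ≤ i then j+1-c else if c ≤ j then c-i-1 else c
def pf4 (i j c : ℕ) : ℕ :=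
  if c = 0 then 0 else if c = 1 then i else if c = 2 then j
  else if c ≤ i+1 then c-2 else if c ≤ j then c-1 else c

/-- The candidate at the bottom of ballot 2. -/
def wval (i j m : ℕ) : ℕ :=
  if j + 1 < m then m - 1 else if i = 1 then (if j = 2 then 1 else m - 1) else 3

/-- The manipulated ballot of voter `1`: swap `a` and `u`, and move `b` to the bottom
(by exchanging it with the bottom candidate `wval`). -/
def swn (i j m c : ℕ) : ℕ :=
  if c = 0 then 2 else if c = 2 then 0 else if c = 1 then wval i j m
  else if c = wval i j m then 1 else c
def qf (i j m c : ℕ) : ℕ := pf2 i j (swn i j m c)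

noncomputable def mkPerm (m : ℕ) (f : ℕ → ℕ) (hb : ∀ c, c < m → f c < m)
    (hinj : ∀ a b, a < m → b < m → f a = f b → a = b) : Pref m :=
  Equiv.ofBijective (fun c => ⟨f c.1, hb c.1 c.2⟩)
    (Finite.injective_iff_bijective.mp fun a b h =>
      Fin.ext (hinj a.1 b.1 a.2 b.2 (congrArg Fin.val h)))

variable {m i j : ℕ}

lemma pf1_lt (h1 : 1 ≤ i) (h2 : i < j) (h3 : j + 1 ≤ m) : ∀ c, c < m → pf1 i j c < m := by
  intro c hc; unfold pf1; split_ifs <;> (try contradiction) <;> omega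
lemma pf2_lt (h1 : 1 ≤ i) (h2 : i < j) (h3 : j + 1 ≤ m) : ∀ c, c < m → pf2 i j c < m := by
  intro c hc; unfold pf2; split_ifs <;> (try contradiction) <;> omega
lemma pf3_lt (h1 : 1 ≤ i) (h2 : i < j) (h3 : j + 1 ≤ m) : ∀ c, c < m → pf3 i j c < m := by
  intro c hc; unfold pf3; split_ifs <;> (try contradiction) <;> omega
lemma pf4_lt (h1 : 1 ≤ i) (h2 : i < j) (h3 : j + 1 ≤ m) : ∀ c, c < m → pf4 i j c < m := by
  intro c hc; unfold pf4; split_ifs <;> (try contradiction) <;> omega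
lemma pf1_inj (h1 : 1 ≤ i) (h2 : i < j) (h3 : j + 1 ≤ m) :
    ∀ a b, a < m → b < m → pf1 i j a = pf1 i j b → a = b := by
  intro a b ha hb h; unfold pf1 at h; split_ifs at h <;> omega
lemma pf2_inj (h1 : 1 ≤ i) (h2 : i < j) (h3 : j + 1 ≤ m) :
    ∀ a b, a < m → b < m → pf2 i j a = pf2 i j b → a = b := by
  intro a b ha hb h; unfold pf2 at h; split_ifs at h <;> omega
lemma pf3_inj (h1 : 1 ≤ i) (h2 : i < j) (h3 : j + 1 ≤ m) :
    ∀ a b, a < m → b < m → pf3 i j a = pf3 i j b → a = b := by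
  intro a b ha hb h; unfold pf3 at h; split_ifs at h <;> omega
lemma pf4_inj (h1 : 1 ≤ i) (h2 : i < j) (h3 : j + 1 ≤ m) :
    ∀ a b, a < m → b < m → pf4 i j a = pf4 i j b → a = b := by
  intro a b ha hb h; unfold pf4 at h; split_ifs at h <;> omega

lemma wval_lt (h1 : 1 ≤ i) (h2 : i < j) (h3 : j + 1 ≤ m) : wval i j m < m := by
  unfold wval; split_ifs <;> (try contradiction) <;> omega
lemma wval_ne (h1 : 1 ≤ i) (h2 : i < j) (h3 : j + 1 ≤ m) :
    wval i j m ≠ 0 ∧ wval i j m ≠ 2 := by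
  unfold wval; split_ifs <;> (try contradiction) <;> omega
lemma swn_lt (h1 : 1 ≤ i) (h2 : i < j) (h3 : j + 1 ≤ m) : ∀ c, c < m → swn i j m c < m := by
  have := wval_lt h1 h2 h3
  intro c hc; unfold swn; split_ifs <;> (try contradiction) <;> omega
lemma swn_inj (h1 : 1 ≤ i) (h2 : i < j) (h3 : j + 1 ≤ m) :
    ∀ a b, a < m → b < m → swn i j m a = swn i j m b → a = b := by
  have h0 := (wval_ne h1 h2 h3).1
  have hh2 := (wval_ne h1 h2 h3).2
  intro a b ha hb h; unfold swn at h; split_ifs at h <;> omega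
lemma qf_lt (h1 : 1 ≤ i) (h2 : i < j) (h3 : j + 1 ≤ m) : ∀ c, c < m → qf i j m c < m :=
  fun c hc => pf2_lt h1 h2 h3 _ (swn_lt h1 h2 h3 c hc)
lemma qf_inj (h1 : 1 ≤ i) (h2 : i < j) (h3 : j + 1 ≤ m) :
    ∀ a b, a < m → b < m → qf i j m a = qf i j m b → a = b :=
  fun a b ha hb h => swn_inj h1 h2 h3 a b ha hb
    (pf2_inj h1 h2 h3 _ _ (swn_lt h1 h2 h3 a ha) (swn_lt h1 h2 h3 b hb) h)

lemma pf2_wval (h1 : 1 ≤ i) (h2 : i < j) (h3 : j + 1 ≤ m) :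
    pf2 i j (wval i j m) = m - 1 := by
  unfold wval
  split_ifs with ha hb hc
  · unfold pf2; split_ifs <;> (try contradiction) <;> omega
  · have h4 : pf2 i j 1 = 2 := rfl
    omega
  · unfold pf2; split_ifs <;> (try contradiction) <;> omega
  · unfold pf2; split_ifs <;> (try contradiction) <;> omega

lemma qf1 (h1 : 1 ≤ i) (h2 : i < j) (h3 : j + 1 ≤ m) : qf i j m 1 = m - 1 := by
  have hs : swn i j m 1 = wval i j m := rfl
  unfold qf; rw [hs]; exact pf2_wval h1 h2 h3

lemma qf_wval (h1 : 1 ≤ i) (h2 : i < j) (h3 : j + 1 ≤ m) : qf i j m (wval i j m) = 2 := by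
  have h0 := (wval_ne h1 h2 h3).1
  have hh2 := (wval_ne h1 h2 h3).2
  unfold qf swn
  rw [if_neg h0, if_neg hh2]
  by_cases h1' : wval i j m = 1
  · rw [if_pos h1', h1']; rfl
  · rw [if_neg h1', if_pos rfl]; rfl

lemma qf_other (h1 : 1 ≤ i) (h2 : i < j) (h3 : j + 1 ≤ m) (c : ℕ)
    (hc0 : c ≠ 0) (hc1 : c ≠ 1) (hc2 : c ≠ 2) (hcw : c ≠ wval i j m) :
    qf i j m c = pf2 i j c := by
  unfold qf swn; rw [if_neg hc0, if_neg hc2, if_neg hc1, if_neg hcw]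

/-- The sincere profile. -/
noncomputable def prof (m i j : ℕ) (h1 : 1 ≤ i) (h2 : i < j) (h3 : j + 1 ≤ m) :
    Fin 4 → Pref m := fun v =>
  if v = 0 then mkPerm m (pf1 i j) (pf1_lt h1 h2 h3) (pf1_inj h1 h2 h3)
  else if v = 1 then mkPerm m (pf2 i j) (pf2_lt h1 h2 h3) (pf2_inj h1 h2 h3)
  else if v = 2 then mkPerm m (pf3 i j) (pf3_lt h1 h2 h3) (pf3_inj h1 h2 h3)
  else mkPerm m (pf4 i j) (pf4_lt h1 h2 h3) (pf4_inj h1 h2 h3)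

/-- The manipulated ballot of voter 1. -/
noncomputable def qprof (m i j : ℕ) (h1 : 1 ≤ i) (h2 : i < j) (h3 : j + 1 ≤ m) : Pref m :=
  mkPerm m (qf i j m) (qf_lt h1 h2 h3) (qf_inj h1 h2 h3)

lemma score_ex (k : ℕ) (R : Fin 4 → Pref m) (c : Fin m) :
    score (fun r => k - (r : ℕ)) R c
      = (k - (R 0 c).1) + (k - (R 1 c).1) + (k - (R 2 c).1) + (k - (R 3 c).1) := by
  simp [score, Fin.sum_univ_four]

lemma score_prof (h1 : 1 ≤ i) (h2 : i < j) (h3 : j + 1 ≤ m) (k : ℕ) (c : Fin m) :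
    score (fun r => k - (r : ℕ)) (prof m i j h1 h2 h3) c
      = (k - pf1 i j c.1) + (k - pf2 i j c.1) + (k - pf3 i j c.1) + (k - pf4 i j c.1) := by
  rw [score_ex]; rfl

lemma score_upd1 (h1 : 1 ≤ i) (h2 : i < j) (h3 : j + 1 ≤ m) (Q : Pref m) (k : ℕ) (c : Fin m) :
    score (fun r => k - (r : ℕ)) (Function.update (prof m i j h1 h2 h3) 1 Q) c
      = (k - pf1 i j c.1) + (k - (Q c).1) + (k - pf3 i j c.1) + (k - pf4 i j c.1) := by
  rw [score_ex, Function.update_of_ne (show (0:Fin 4) ≠ 1 by decide),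
      Function.update_self, Function.update_of_ne (show (2:Fin 4) ≠ 1 by decide),
      Function.update_of_ne (show (3:Fin 4) ≠ 1 by decide)]
  rfl

lemma score_upd3 (h1 : 1 ≤ i) (h2 : i < j) (h3 : j + 1 ≤ m) (Q : Pref m) (k : ℕ) (c : Fin m) :
    score (fun r => k - (r : ℕ)) (Function.update (prof m i j h1 h2 h3) 3 Q) c
      = (k - pf1 i j c.1) + (k - pf2 i j c.1) + (k - pf3 i j c.1) + (k - (Q c).1) := by
  rw [score_ex, Function.update_of_ne (show (0:Fin 4) ≠ 3 by decide),
      Function.update_of_ne (show (1:Fin 4) ≠ 3 by decide),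
      Function.update_of_ne (show (2:Fin 4) ≠ 3 by decide), Function.update_self]
  rfl

lemma e11 : pf1 i j 1 = 0 := rfl
lemma e21 : pf2 i j 1 = 2 := rfl
lemma e31 : pf3 i j 1 = 0 := rfl
lemma e41 : pf4 i j 1 = i := rfl
lemma e10 : pf1 i j 0 = j := rfl
lemma e20 : pf2 i j 0 = 1 := rfl
lemma e30 : pf3 i j 0 = j := rfl
lemma e40 : pf4 i j 0 = 0 := rfl
lemma e12 : pf1 i j 2 = j - 1 := rfl
lemma e32 : pf3 i j 2 = j - i := rfl
lemma e42 : pf4 i j 2 = j := rfl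
lemma eq0 : qf i j m 0 = 0 := rfl
lemma eq2 : qf i j m 2 = 1 := rfl

/-- Sincere `i`-Borda: everybody scores at most `b = 1`. -/
lemma ineqA (h1 : 1 ≤ i) (h2 : i < j) (h3 : j + 1 ≤ m) : ∀ c, c < m →
    (i - pf1 i j c) + (i - pf2 i j c) + (i - pf3 i j c) + (i - pf4 i j c)
      ≤ (i - pf1 i j 1) + (i - pf2 i j 1) + (i - pf3 i j 1) + (i - pf4 i j 1) := by
  intro c hc; rw [e11, e21, e31, e41]; unfold pf1 pf2 pf3 pf4; split_ifs <;> (try contradiction) <;> omega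

lemma ineqA0 (h1 : 1 ≤ i) (h2 : i < j) (h3 : j + 1 ≤ m) :
    (i - pf1 i j 0) + (i - pf2 i j 0) + (i - pf3 i j 0) + (i - pf4 i j 0)
      < (i - pf1 i j 1) + (i - pf2 i j 1) + (i - pf3 i j 1) + (i - pf4 i j 1) := by
  rw [e10, e20, e30, e40, e11, e21, e31, e41]; omega

/-- Sincere `j`-Borda: everybody scores at most `b = 1`. -/
lemma ineqC (h1 : 1 ≤ i) (h2 : i < j) (h3 : j + 1 ≤ m) : ∀ c, c < m →
    (j - pf1 i j c) + (j - pf2 i j c) + (j - pf3 i j c) + (j - pf4 i j c)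
      ≤ (j - pf1 i j 1) + (j - pf2 i j 1) + (j - pf3 i j 1) + (j - pf4 i j 1) := by
  intro c hc; rw [e11, e21, e31, e41]; unfold pf1 pf2 pf3 pf4; split_ifs <;> (try contradiction) <;> omega

lemma ineqC0 (h1 : 1 ≤ i) (h2 : i < j) (h3 : j + 1 ≤ m) :
    (j - pf1 i j 0) + (j - pf2 i j 0) + (j - pf3 i j 0) + (j - pf4 i j 0)
      < (j - pf1 i j 1) + (j - pf2 i j 1) + (j - pf3 i j 1) + (j - pf4 i j 1) := by
  rw [e10, e20, e30, e40, e11, e21, e31, e41]; omega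

/-- Score bound for the candidate moved up to position 2 by the manipulation. -/
lemma ineqBW (h1 : 1 ≤ i) (h2 : i < j) (h3 : j + 1 ≤ m) (c : ℕ) (hc3 : 3 ≤ c)
    (hcm : c < m) (hp : pf2 i j c = m - 1) :
    (i - pf1 i j c) + (i - 2) + (i - pf3 i j c) + (i - pf4 i j c)
      ≤ (i - j) + (i - 0) + (i - j) + (i - 0) := by
  unfold pf2 at hp
  split_ifs at hp
  all_goals (unfold pf1 pf3 pf4 ; split_ifs <;> (try contradiction) <;> omega)

/-- After voter 1's manipulation, under `i`-Borda everybody scores at most `a = 0`. -/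
lemma ineqB (h1 : 1 ≤ i) (h2 : i < j) (h3 : j + 1 ≤ m) : ∀ c, c < m →
    (i - pf1 i j c) + (i - qf i j m c) + (i - pf3 i j c) + (i - pf4 i j c)
      ≤ (i - pf1 i j 0) + (i - qf i j m 0) + (i - pf3 i j 0) + (i - pf4 i j 0) := by
  intro c hc
  rw [e10, eq0, e30, e40]
  by_cases hc0 : c = 0
  · subst hc0; rw [e10, eq0, e30, e40]
  by_cases hc1 : c = 1
  · subst hc1; rw [e11, qf1 h1 h2 h3, e31, e41]; omega
  by_cases hc2 : c = 2
  · subst hc2; rw [e12, eq2, e32, e42]; omega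
  by_cases hcw : c = wval i j m
  · subst hcw
    rw [qf_wval h1 h2 h3]
    exact ineqBW h1 h2 h3 (wval i j m) (by omega) (wval_lt h1 h2 h3) (pf2_wval h1 h2 h3)
  · rw [qf_other h1 h2 h3 c hc0 hc1 hc2 hcw]
    unfold pf1 pf2 pf3 pf4
    split_ifs <;> (try contradiction) <;> omega

/-- Characterization: candidates voter 1 prefers to `b`. -/
lemma char2 (h1 : 1 ≤ i) (h2 : i < j) (h3 : j + 1 ≤ m) : ∀ c, c < m →
    pf2 i j c < 2 → c = 0 ∨ c = 2 := by
  intro c hc h; unfold pf2 at h; split_ifs at h <;> omega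

/-- Characterization: candidates voter 3 prefers to `b`. -/
lemma char4 (h1 : 1 ≤ i) (h2 : i < j) (h3 : j + 1 ≤ m) : ∀ c, c < m →
    pf4 i j c < i → c = 0 ∨ (3 ≤ c ∧ c ≤ i + 1) := by
  intro c hc h; unfold pf4 at h; split_ifs at h <;> omega

/-- Voter 1 cannot make `a` win under `j`-Borda. -/
lemma n1a (h1 : 1 ≤ i) (h2 : i < j) (h3 : j + 1 ≤ m) (qa qb : ℕ) :
    (j - pf1 i j 0) + (j - qa) + (j - pf3 i j 0) + (j - pf4 i j 0)
      < (j - pf1 i j 1) + (j - qb) + (j - pf3 i j 1) + (j - pf4 i j 1) := by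
  rw [e10, e30, e40, e11, e31, e41]; omega

/-- Voter 1 cannot make `u` beat `b` under `j`-Borda. -/
lemma n1u (h1 : 1 ≤ i) (h2 : i < j) (h3 : j + 1 ≤ m) (qu qb : ℕ) :
    (j - pf1 i j 2) + (j - qu) + (j - pf3 i j 2) + (j - pf4 i j 2)
      ≤ (j - pf1 i j 1) + (j - qb) + (j - pf3 i j 1) + (j - pf4 i j 1) := by
  rw [e12, e32, e42, e11, e31, e41]; omega

/-- Voter 3 cannot make `a` win under `j`-Borda. -/
lemma n3a (h1 : 1 ≤ i) (h2 : i < j) (h3 : j + 1 ≤ m) (qa qb : ℕ) :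
    (j - pf1 i j 0) + (j - pf2 i j 0) + (j - pf3 i j 0) + (j - qa)
      < (j - pf1 i j 1) + (j - pf2 i j 1) + (j - pf3 i j 1) + (j - qb) := by
  rw [e10, e20, e30, e11, e21, e31]; omega

/-- Voter 3 cannot make any `D`-candidate beat `b` under `j`-Borda. -/
lemma n3d (h1 : 1 ≤ i) (h2 : i < j) (h3 : j + 1 ≤ m) (c : ℕ) (hc3 : 3 ≤ c)
    (hci : c ≤ i + 1) (hcm : c < m) (qd qb : ℕ) :
    (j - pf1 i j c) + (j - pf2 i j c) + (j - pf3 i j c) + (j - qd)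
      ≤ (j - pf1 i j 1) + (j - pf2 i j 1) + (j - pf3 i j 1) + (j - qb) := by
  rw [e11, e21, e31]; unfold pf1 pf2 pf3; split_ifs <;> (try contradiction) <;> omega

section W
variable {n : ℕ} [NeZero m]

lemma winner_mem (s : Fin m → ℕ) (P : Fin n → Pref m) :
    winner s P ∈ Finset.univ.filter fun c => ∀ d, score s P d ≤ score s P c := by
  unfold winner; exact Finset.min'_mem _ _

lemma winner_le (s : Fin m → ℕ) (P : Fin n → Pref m) (y : Fin m)
    (hy : y ∈ Finset.univ.filter fun c => ∀ d, score s P d ≤ score s P c) :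
    winner s P ≤ y := by
  unfold winner; exact Finset.min'_le _ _ hy

lemma winner_eq_of (s : Fin m → ℕ) (P : Fin n → Pref m) (y : Fin m)
    (hmax : ∀ d, score s P d ≤ score s P y)
    (hlt : ∀ x, x < y → score s P x < score s P y) : winner s P = y := by
  have hy : y ∈ Finset.univ.filter fun c => ∀ d, score s P d ≤ score s P c :=
    Finset.mem_filter.mpr ⟨Finset.mem_univ _, hmax⟩
  refine le_antisymm (winner_le s P y hy) ?_
  by_contra h
  push_neg at h
  have hmem := winner_mem s P
  rw [Finset.mem_filter] at hmem
  exact absurd (hmem.2 y) (not_le.mpr (hlt _ h))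

lemma winner_ne_strict (s : Fin m → ℕ) (P : Fin n → Pref m) (x y : Fin m)
    (h : score s P x < score s P y) : winner s P ≠ x := by
  intro hw
  have hmem := winner_mem s P
  rw [hw, Finset.mem_filter] at hmem
  exact absurd (hmem.2 y) (not_le.mpr h)

lemma winner_ne_tie (s : Fin m → ℕ) (P : Fin n → Pref m) (x y : Fin m)
    (hyx : y < x) (h : score s P x ≤ score s P y) : winner s P ≠ x := by
  intro hw
  have hmem := winner_mem s P
  rw [hw, Finset.mem_filter] at hmem
  have hymem : y ∈ Finset.univ.filter fun c => ∀ d, score s P d ≤ score s P c :=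
    Finset.mem_filter.mpr ⟨Finset.mem_univ _, fun d => le_trans (hmem.2 d) h⟩
  have := winner_le s P y hymem
  rw [hw] at this
  exact absurd hyx (not_lt.mpr this)

end W

variable [NeZero m]

lemma winner_i (h1 : 1 ≤ i) (h2 : i < j) (h3 : j + 1 ≤ m) :
    winner (fun r => i - (r : ℕ)) (prof m i j h1 h2 h3) = ⟨1, by omega⟩ := by
  apply winner_eq_of
  · intro d
    rw [score_prof h1 h2 h3, score_prof h1 h2 h3]
    exact ineqA h1 h2 h3 d.1 d.2
  · intro x hx
    have hx1 : x.1 < 1 := hx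
    have hx0 : x = (⟨0, by omega⟩ : Fin m) := Fin.ext (show x.1 = 0 by omega)
    rw [hx0, score_prof h1 h2 h3, score_prof h1 h2 h3]
    exact ineqA0 h1 h2 h3

lemma winner_j (h1 : 1 ≤ i) (h2 : i < j) (h3 : j + 1 ≤ m) :
    winner (fun r => j - (r : ℕ)) (prof m i j h1 h2 h3) = ⟨1, by omega⟩ := by
  apply winner_eq_of
  · intro d
    rw [score_prof h1 h2 h3, score_prof h1 h2 h3]
    exact ineqC h1 h2 h3 d.1 d.2
  · intro x hx
    have hx1 : x.1 < 1 := hx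
    have hx0 : x = (⟨0, by omega⟩ : Fin m) := Fin.ext (show x.1 = 0 by omega)
    rw [hx0, score_prof h1 h2 h3, score_prof h1 h2 h3]
    exact ineqC0 h1 h2 h3

lemma winner_upd (h1 : 1 ≤ i) (h2 : i < j) (h3 : j + 1 ≤ m) :
    winner (fun r => i - (r : ℕ))
      (Function.update (prof m i j h1 h2 h3) 1 (qprof m i j h1 h2 h3)) = ⟨0, by omega⟩ := by
  apply winner_eq_of
  · intro d
    rw [score_upd1 h1 h2 h3, score_upd1 h1 h2 h3]
    exact ineqB h1 h2 h3 d.1 d.2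
  · intro x hx
    have hx1 : x.1 < 0 := hx
    omega

lemma manip (h1 : 1 ≤ i) (h2 : i < j) (h3 : j + 1 ≤ m) :
    Manipulable (kBorda m 4 i) (prof m i j h1 h2 h3) := by
  refine ⟨1, qprof m i j h1 h2 h3, ?_⟩
  unfold kBorda
  rw [winner_upd h1 h2 h3, winner_i h1 h2 h3]
  have hv0 : (prof m i j h1 h2 h3 1 ⟨0, by omega⟩).1 = 1 := rfl
  have hv1 : (prof m i j h1 h2 h3 1 ⟨1, by omega⟩).1 = 2 := rfl
  rw [Fin.lt_def, hv0, hv1]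
  omega

lemma nonmanip (h1 : 1 ≤ i) (h2 : i < j) (h3 : j + 1 ≤ m) :
    ¬ Manipulable (kBorda m 4 j) (prof m i j h1 h2 h3) := by
  rintro ⟨v, Q, hlt⟩
  unfold kBorda at hlt
  rw [winner_j h1 h2 h3] at hlt
  rcases v with ⟨vv, hv⟩
  interval_cases vv
  · -- voter 0: b is on top
    have h0 : (prof m i j h1 h2 h3 ⟨0, hv⟩ ⟨1, by omega⟩).1 = 0 := rfl
    have hl := Fin.lt_def.mp hlt
    omega
  · -- voter 1
    rw [show (⟨1, hv⟩ : Fin 4) = 1 from rfl] at hlt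
    have hl : pf2 i j (winner (fun r => j - (r : ℕ))
        (Function.update (prof m i j h1 h2 h3) 1 Q)).1 < 2 := Fin.lt_def.mp hlt
    set W := winner (fun r => j - (r : ℕ)) (Function.update (prof m i j h1 h2 h3) 1 Q) with hWdef
    rcases char2 h1 h2 h3 W.1 W.2 hl with h | h
    · refine winner_ne_strict _ _ W ⟨1, by omega⟩ ?_ rfl
      rw [score_upd1 h1 h2 h3, score_upd1 h1 h2 h3, h]
      exact n1a h1 h2 h3 _ _
    · refine winner_ne_tie _ _ W ⟨1, by omega⟩ (Fin.lt_def.mpr (show (1:ℕ) < W.1 by omega)) ?_ rfl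
      rw [score_upd1 h1 h2 h3, score_upd1 h1 h2 h3, h]
      exact n1u h1 h2 h3 _ _
  · -- voter 2: b is on top
    have h0 : (prof m i j h1 h2 h3 ⟨2, hv⟩ ⟨1, by omega⟩).1 = 0 := rfl
    have hl := Fin.lt_def.mp hlt
    omega
  · -- voter 3
    rw [show (⟨3, hv⟩ : Fin 4) = 3 from rfl] at hlt
    have hl : pf4 i j (winner (fun r => j - (r : ℕ))
        (Function.update (prof m i j h1 h2 h3) 3 Q)).1 < i := Fin.lt_def.mp hlt
    set W := winner (fun r => j - (r : ℕ)) (Function.update (prof m i j h1 h2 h3) 3 Q) with hWdef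
    rcases char4 h1 h2 h3 W.1 W.2 hl with h | h
    · refine winner_ne_strict _ _ W ⟨1, by omega⟩ ?_ rfl
      rw [score_upd3 h1 h2 h3, score_upd3 h1 h2 h3, h]
      exact n3a h1 h2 h3 _ _
    · refine winner_ne_tie _ _ W ⟨1, by omega⟩ (Fin.lt_def.mpr (show (1:ℕ) < W.1 by omega)) ?_ rfl
      rw [score_upd3 h1 h2 h3, score_upd3 h1 h2 h3]
      exact n3d h1 h2 h3 W.1 h.1 h.2 W.2 _ _

end S14

/-- For `1 ≤ i < j ≤ m-1` and `n = 4`: `β_j ≱_PS β_i`. -/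
theorem stmt_14 (m i j : ℕ) [NeZero m] (hi : 1 ≤ i) (hij : i < j) (hj : j ≤ m - 1) :
    ∃ P : Fin 4 → Pref m,
      Manipulable (kBorda m 4 i) P ∧ ¬ Manipulable (kBorda m 4 j) P := by
  have h3 : j + 1 ≤ m := by omega
  exact ⟨S14.prof m i j hi hij h3, S14.manip hi hij h3, S14.nonmanip hi hij h3⟩
end

section
/- Let n = 2 and let k ≥ 1 with m > k+2. Then β_{k+1} ≥_PS β_k; that is, every profile of 2 preferences over m candidates at which the k-Borda rule β_k is manipulable is also a profile at which the (k+1)-Borda rule β_{k+1} is manipulable. -/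
section Aux

open Finset

lemma score_two {m : ℕ} (s : Fin m → ℕ) (P : Fin 2 → Pref m) (c : Fin m) :
    score s P c = s (P 0 c) + s (P 1 c) := by
  simp [score, Fin.sum_univ_two]

lemma score_pair {m : ℕ} (s : Fin m → ℕ) (P : Fin 2 → Pref m) (c : Fin m)
    (v u : Fin 2) (huv : u ≠ v) :
    score s P c = s (P v c) + s (P u c) := by
  fin_cases v <;> fin_cases u
  · exact absurd rfl huv
  · exact score_two s P c
  · rw [score_two s P c]; exact Nat.add_comm _ _
  · exact absurd rfl huv

lemma winner_mem {m n : ℕ} [NeZero m] (s : Fin m → ℕ) (P : Fin n → Pref m) :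
    ∀ d, score s P d ≤ score s P (winner s P) := by
  have h : winner s P ∈ Finset.univ.filter fun c => ∀ d, score s P d ≤ score s P c :=
    Finset.min'_mem _ _
  exact (Finset.mem_filter.mp h).2

lemma winner_le {m n : ℕ} [NeZero m] (s : Fin m → ℕ) (P : Fin n → Pref m) (d : Fin m)
    (hd : ∀ e, score s P e ≤ score s P d) : winner s P ≤ d :=
  Finset.min'_le _ _ (Finset.mem_filter.mpr ⟨Finset.mem_univ _, hd⟩)

lemma eq_winner {m n : ℕ} [NeZero m] (s : Fin m → ℕ) (P : Fin n → Pref m) (c : Fin m)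
    (h1 : ∀ d, score s P d ≤ score s P c)
    (h2 : ∀ d, score s P d = score s P c → c ≤ d) : winner s P = c :=
  le_antisymm (winner_le s P c h1) (h2 _ (le_antisymm (h1 _) (winner_mem s P c)))

/-- The manipulation used: put `c` on top, everybody else in reverse order of `q`. -/
def buildQ {m : ℕ} (q : Pref m) (c : Fin m) (hm1 : 0 < m) (d : Fin m) : Fin m :=
  if hd : d = c then ⟨0, hm1⟩
  else ⟨if (q d : ℕ) < (q c : ℕ) then m - 1 - (q d : ℕ) else m - (q d : ℕ), by
    have h1 := (q d).isLt
    have h2 : (q d : ℕ) ≠ (q c : ℕ) := fun h => hd (q.injective (Fin.val_injective h))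
    have h3 := (q c).isLt
    split <;> omega⟩

lemma buildQ_c {m : ℕ} (q : Pref m) (c : Fin m) (hm1 : 0 < m) :
    (buildQ q c hm1 c : ℕ) = 0 := by
  simp [buildQ]

lemma buildQ_ne {m : ℕ} (q : Pref m) (c : Fin m) (hm1 : 0 < m) (d : Fin m) (hd : d ≠ c) :
    (buildQ q c hm1 d : ℕ) =
      if (q d : ℕ) < (q c : ℕ) then m - 1 - (q d : ℕ) else m - (q d : ℕ) := by
  rw [buildQ, dif_neg hd]

lemma can_achieve {m k : ℕ} [NeZero m] (hm : k + 2 < m) (P : Fin 2 → Pref m)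
    (v u : Fin 2) (huv : u ≠ v) (c : Fin m)
    (hc : (P u c : ℕ) ≤ k ∨ c < (P u).symm 0) :
    ∃ Q : Pref m, winner (fun r => (k + 1) - (r : ℕ)) (Function.update P v Q) = c := by
  have hm1 : 0 < m := Fin.pos c
  set q : Pref m := P u with hq
  have hneq : ∀ d : Fin m, d ≠ c → (q d : ℕ) ≠ (q c : ℕ) :=
    fun d hd h => hd (q.injective (Fin.val_injective h))
  have hinj : Function.Injective (buildQ q c hm1) := by
    have hne0 : ∀ d, d ≠ c → (buildQ q c hm1 d : ℕ) ≠ 0 := by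
      intro d hd
      rw [buildQ_ne q c hm1 d hd]
      have h1 := (q d).isLt
      have h2 := (q c).isLt
      have h3 := hneq d hd
      split <;> omega
    intro d e hde
    by_cases hd : d = c <;> by_cases he : e = c
    · exact hd.trans he.symm
    · exact absurd (by rw [← congrArg Fin.val hde, hd, buildQ_c]) (hne0 e he)
    · exact absurd (by rw [congrArg Fin.val hde, he, buildQ_c]) (hne0 d hd)
    · have hval : (buildQ q c hm1 d : ℕ) = (buildQ q c hm1 e : ℕ) := congrArg Fin.val hde
      rw [buildQ_ne q c hm1 d hd, buildQ_ne q c hm1 e he] at hval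
      have h1 := (q d).isLt
      have h2 := (q e).isLt
      have h3 := hneq d hd
      have h4 := hneq e he
      have : (q d : ℕ) = (q e : ℕ) := by split_ifs at hval <;> omega
      exact q.injective (Fin.val_injective this)
  have hbij : Function.Bijective (buildQ q c hm1) :=
    (Fintype.bijective_iff_injective_and_card _).mpr ⟨hinj, rfl⟩
  refine ⟨Equiv.ofBijective _ hbij, ?_⟩
  set P' : Fin 2 → Pref m := Function.update P v (Equiv.ofBijective _ hbij) with hP'
  have hP'v : ∀ d : Fin m, (P' v d : ℕ) = (buildQ q c hm1 d : ℕ) := by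
    intro d; rw [hP', Function.update_self]; rfl
  have hP'u : ∀ d : Fin m, (P' u d : ℕ) = (q d : ℕ) := by
    intro d; rw [hP', Function.update_of_ne huv]
  have hsc : ∀ d : Fin m, score (fun r => (k + 1) - (r : ℕ)) P' d =
      ((k + 1) - (P' v d : ℕ)) + ((k + 1) - (P' u d : ℕ)) :=
    fun d => score_pair _ P' d v u huv
  have hSc : score (fun r => (k + 1) - (r : ℕ)) P' c = (k + 1) + ((k + 1) - (q c : ℕ)) := by
    rw [hsc c, hP'v c, hP'u c, buildQ_c]
    omega
  have hSd : ∀ d, d ≠ c → score (fun r => (k + 1) - (r : ℕ)) P' d ≤ k + 1 ∧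
      (score (fun r => (k + 1) - (r : ℕ)) P' d = k + 1 → (q d : ℕ) = 0) := by
    intro d hd
    rw [hsc d, hP'v d, hP'u d, buildQ_ne q c hm1 d hd]
    have h1 := (q d).isLt
    have h2 := (q c).isLt
    have h3 := hneq d hd
    split <;> constructor <;> omega
  apply eq_winner
  · intro d
    by_cases hd : d = c
    · exact hd ▸ le_refl _
    · have := (hSd d hd).1
      omega
  · intro d hdc
    by_cases hd : d = c
    · exact hd ▸ le_refl _
    rcases Nat.lt_or_ge (q c : ℕ) (k + 1) with ht | ht
    · exact absurd hdc (by have := (hSd d hd).1; omega)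
    · rcases hc with hc | hc
      · omega
      · have hq0 : (q d : ℕ) = 0 := (hSd d hd).2 (by omega)
        have hdb : d = (P u).symm 0 := by
          rw [← hq]
          exact (Equiv.eq_symm_apply q).mpr (Fin.val_injective (by rw [hq0, Fin.val_zero]))
        exact le_of_lt (hdb ▸ hc)

lemma sincere_constraint {m k : ℕ} [NeZero m] (R : Fin 2 → Pref m) (v u : Fin 2)
    (huv : u ≠ v) :
    ((R u (winner (fun r => k - (r : ℕ)) R)) : ℕ) < k ∨
      winner (fun r => k - (r : ℕ)) R ≤ (R u).symm 0 := by
  by_contra hcon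
  push_neg at hcon
  obtain ⟨h1, h2⟩ := hcon
  have hub : (R u ((R u).symm 0) : ℕ) = 0 := by rw [Equiv.apply_symm_apply, Fin.val_zero]
  have eb : score (fun r => k - (r : ℕ)) R ((R u).symm 0) =
      (k - (R v ((R u).symm 0) : ℕ)) + (k - (R u ((R u).symm 0) : ℕ)) :=
    score_pair _ R _ v u huv
  have ec : score (fun r => k - (r : ℕ)) R (winner (fun r => k - (r : ℕ)) R) =
      (k - (R v (winner (fun r => k - (r : ℕ)) R) : ℕ)) +
        (k - (R u (winner (fun r => k - (r : ℕ)) R) : ℕ)) :=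
    score_pair _ R _ v u huv
  have hcb : winner (fun r => k - (r : ℕ)) R ≤ (R u).symm 0 :=
    winner_le _ R _ (fun e => by
      have := winner_mem (fun r => k - (r : ℕ)) R e
      omega)
  exact absurd hcb (not_le.mpr h2)

lemma not_manip_cond {m k : ℕ} [NeZero m] (hm : k + 2 < m) (P : Fin 2 → Pref m)
    (h : ¬ Manipulable (kBorda m 2 (k + 1)) P) (v u : Fin 2) (huv : u ≠ v) (c : Fin m)
    (hpref : P v c < P v (kBorda m 2 (k + 1) P)) :
    k + 1 ≤ (P u c : ℕ) ∧ (P u).symm 0 < c := by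
  by_contra hcon
  apply h
  push_neg at hcon
  have hc : (P u c : ℕ) ≤ k ∨ c < (P u).symm 0 := by
    rcases Nat.lt_or_ge (P u c : ℕ) (k + 1) with h' | h'
    · exact Or.inl (by omega)
    · right
      refine lt_of_le_of_ne ?_ ?_
      · exact hcon h'
      · intro he
        have : (P u c : ℕ) = 0 := by rw [he, Equiv.apply_symm_apply, Fin.val_zero]
        omega
  obtain ⟨Q, hQ⟩ := can_achieve hm P v u huv c hc
  refine ⟨v, Q, ?_⟩
  show P v (winner (fun r => (k + 1) - (r : ℕ)) (Function.update P v Q)) <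
    P v (kBorda m 2 (k + 1) P)
  rw [hQ]
  exact hpref

lemma wk_eq {m k : ℕ} [NeZero m] (hk : 1 ≤ k) (P : Fin 2 → Pref m) (v u : Fin 2)
    (huv : u ≠ v) (W : Fin m) (hvW : P v W = 0)
    (hcond : ∀ c, P u c < P u W → (k + 1 ≤ (P v c : ℕ) ∧ (P v).symm 0 < c)) :
    winner (fun r => k - (r : ℕ)) P = W := by
  have hvW0 : (P v W : ℕ) = 0 := by rw [hvW, Fin.val_zero]
  have hWtop : W = (P v).symm 0 := (Equiv.eq_symm_apply (P v)).mpr hvW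
  have eW : score (fun r => k - (r : ℕ)) P W = (k - (P v W : ℕ)) + (k - (P u W : ℕ)) :=
    score_pair _ P W v u huv
  have key : ∀ d, d ≠ W → score (fun r => k - (r : ℕ)) P d ≤
      score (fun r => k - (r : ℕ)) P W ∧
      (score (fun r => k - (r : ℕ)) P d = score (fun r => k - (r : ℕ)) P W → W < d) := by
    intro d hd
    have ed : score (fun r => k - (r : ℕ)) P d = (k - (P v d : ℕ)) + (k - (P u d : ℕ)) :=
      score_pair _ P d v u huv
    have hvd : (P v d : ℕ) ≠ 0 := fun h0 => hd ((P v).injective (Fin.val_injective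
      (by rw [h0, hvW0])))
    have hud : (P u d : ℕ) ≠ (P u W : ℕ) := fun h0 => hd ((P u).injective (Fin.val_injective h0))
    rcases Nat.lt_or_ge (P u d : ℕ) (P u W : ℕ) with h' | h'
    · have hcd := hcond d (by rw [Fin.lt_def]; exact h')
      have hWd : W < d := hWtop ▸ hcd.2
      exact ⟨by omega, fun _ => hWd⟩
    · constructor
      · omega
      · intro heq; exfalso; omega
  apply eq_winner
  · intro d
    by_cases hd : d = W
    · exact hd ▸ le_refl _
    · exact (key d hd).1
  · intro d hdW
    by_cases hd : d = W
    · exact hd.symm.le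
    · exact le_of_lt ((key d hd).2 hdW)

end Aux

/-- For `n = 2`, `k ≥ 1`, `m > k+2`: `β_{k+1} ≥_PS β_k`. -/
theorem stmt_17 (m k : ℕ) [NeZero m] (hk : 1 ≤ k) (hm : k + 2 < m) :
    MoreManip (kBorda m 2 (k + 1)) (kBorda m 2 k) := by
  intro P hP
  by_contra h
  have cond01 : ∀ c, P 0 c < P 0 (kBorda m 2 (k + 1) P) →
      k + 1 ≤ (P 1 c : ℕ) ∧ (P 1).symm 0 < c :=
    fun c hc => not_manip_cond hm P h 0 1 (by decide) c hc
  have cond10 : ∀ c, P 1 c < P 1 (kBorda m 2 (k + 1) P) →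
      k + 1 ≤ (P 0 c : ℕ) ∧ (P 0).symm 0 < c :=
    fun c hc => not_manip_cond hm P h 1 0 (by decide) c hc
  set W := kBorda m 2 (k + 1) P with hWdef
  set a := (P 0).symm 0 with ha
  set b := (P 1).symm 0 with hb
  have hPa : P 0 a = 0 := Equiv.apply_symm_apply _ _
  have hPb : P 1 b = 0 := Equiv.apply_symm_apply _ _
  have hab : W = a ∨ W = b := by
    by_contra hcon
    push_neg at hcon
    have h1 : P 0 a < P 0 W := by
      rw [Fin.lt_def, hPa, Fin.val_zero]
      have hne : (P 0 W : ℕ) ≠ 0 := by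
        intro he
        exact hcon.1 ((Equiv.eq_symm_apply (P 0)).mpr (Fin.val_injective
          (by rw [he, Fin.val_zero])))
      omega
    have h2 : P 1 b < P 1 W := by
      rw [Fin.lt_def, hPb, Fin.val_zero]
      have hne : (P 1 W : ℕ) ≠ 0 := by
        intro he
        exact hcon.2 ((Equiv.eq_symm_apply (P 1)).mpr (Fin.val_injective
          (by rw [he, Fin.val_zero])))
      omega
    have h3 := cond01 a h1
    have h4 := cond10 b h2
    exact absurd h4.2 (lt_asymm h3.2)
  have hwk : kBorda m 2 k P = W := by
    rcases hab with hW | hW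
    · exact wk_eq hk P 0 1 (by decide) W (by rw [hW]; exact hPa) cond10
    · exact wk_eq hk P 1 0 (by decide) W (by rw [hW]; exact hPb) cond01
  have condv : ∀ v : Fin 2, ∃ u : Fin 2, u ≠ v ∧
      ∀ c, P v c < P v W → k + 1 ≤ (P u c : ℕ) ∧ (P u).symm 0 < c := by
    intro v
    fin_cases v
    · exact ⟨1, by decide, cond01⟩
    · exact ⟨0, by decide, cond10⟩
  obtain ⟨v, Q, hQ⟩ := hP
  rw [hwk] at hQ
  obtain ⟨u, huv, hcv⟩ := condv v
  have hQ' : P v (winner (fun r => k - (r : ℕ)) (Function.update P v Q)) < P v W := hQ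
  have h3 := sincere_constraint (Function.update P v Q) v u huv (k := k)
  rw [Function.update_of_ne huv] at h3
  have h4 := hcv _ hQ'
  rcases h3 with h3 | h3
  · omega
  · exact absurd h4.2 (not_lt.mpr h3)
end
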